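/- Let N ≥ 1 and let f : 𝔸^N → 𝔸^N be a regular endomorphism of algebraic degree d ≥ 2 defined over a number field K. Then there exists a constant c > 0 such that every f-preperiodic point x = (x_1,…,x_N) ∈ ℚ̄^N satisfies C(x) := max_{1≤i≤N} C(x_i) ≤ c. -/

import Mathlib

set_option synthInstance.maxHeartbeats 1000000
set_option maxHeartbeats 1000000

noncomputable section

/-- The house `C(α)` of an algebraic number `α ∈ ℂ`: the maximum of the absolute values of
the complex roots of its minimal polynomial over `ℚ` (equivalently, of `σ(α)` over all
embeddings `σ : ℚ(α) ↪ ℂ`). -/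
def house (α : ℂ) : ℝ :=
  sSup ((fun z : ℂ => ‖z‖) '' {β : ℂ | Polynomial.aeval β (minpoly ℚ α) = 0})

/-- The self-map of `𝔸^N(ℂ)` induced by an `N`-tuple of polynomials. -/
def evalMap {N : ℕ} (f : Fin N → MvPolynomial (Fin N) ℂ) (z : Fin N → ℂ) : Fin N → ℂ :=
  fun i => MvPolynomial.eval z (f i)

/-- A polynomial has all of its coefficients in the subfield `K` of `ℂ`. -/
def CoeffsIn {n : ℕ} (K : Subfield ℂ) (p : MvPolynomial (Fin n) ℂ) : Prop :=
  ∀ m, MvPolynomial.coeff m p ∈ K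

/-- `z` is preperiodic under `F`. -/
def IsPreperiodicPt {X : Type*} (F : X → X) (z : X) : Prop :=
  ∃ n m : ℕ, 0 < m ∧ F^[n + m] z = F^[n] z

/-- `f = (f_1, …, f_N)` is a regular endomorphism of `𝔸^N` of algebraic degree `d`:
every `f_j` has total degree `d` and the common zero locus of the top-degree homogeneous
parts `f_j^+` is `{0}`. -/
def IsRegularEndo {N : ℕ} (f : Fin N → MvPolynomial (Fin N) ℂ) (d : ℕ) : Prop :=
  (∀ j, (f j).totalDegree = d) ∧
  ∀ z : Fin N → ℂ,
    (∀ j, MvPolynomial.eval z (MvPolynomial.homogeneousComponent d (f j)) = 0) → z = 0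

/-! ### Auxiliary results: extending embeddings to automorphisms of `ℂ` -/

open Cardinal MvPolynomial

theorem aux_equiv (R K L : Type) [Field R] [Field K] [Field L] [Algebra R K] [Algebra R L]
    [IsAlgClosed K] [IsAlgClosed L] (hR : #R ≤ ℵ₀) (hK : ℵ₀ < #K) (hKL : #K = #L) :
    ∃ τ : K ≃+* L, ∀ r : R, τ (algebraMap R K r) = algebraMap R L r := by
  haveI : FaithfulSMul R K := (faithfulSMul_iff_algebraMap_injective R K).2 (algebraMap R K).injective
  haveI : FaithfulSMul R L := (faithfulSMul_iff_algebraMap_injective R L).2 (algebraMap R L).injective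
  obtain ⟨s, hs⟩ := exists_isTranscendenceBasis R K
  obtain ⟨t, ht⟩ := exists_isTranscendenceBasis R L
  have hL : ℵ₀ < #L := hKL ▸ hK
  have h1 : #K = #s :=
    by simpa using IsAlgClosed.cardinal_eq_cardinal_transcendence_basis_of_aleph0_lt _ hs hR hK
  have h2 : #L = #t :=
    by simpa using IsAlgClosed.cardinal_eq_cardinal_transcendence_basis_of_aleph0_lt _ ht hR hL
  have hst : #s = #t := by rw [← h1, ← h2, hKL]
  obtain ⟨e⟩ := Cardinal.eq.1 hst
  letI := IsAlgClosed.isAlgClosure_of_transcendence_basis _ hs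
  letI := IsAlgClosed.isAlgClosure_of_transcendence_basis _ ht
  let e' : Algebra.adjoin R (Set.range ((↑) : s → K)) ≃ₐ[R]
      Algebra.adjoin R (Set.range ((↑) : t → L)) :=
    hs.1.aevalEquiv.symm.trans ((MvPolynomial.renameEquiv R e).trans ht.1.aevalEquiv)
  refine ⟨IsAlgClosure.equivOfEquiv K L e'.toRingEquiv, fun r => ?_⟩
  rw [IsScalarTower.algebraMap_apply R (Algebra.adjoin R (Set.range ((↑) : s → K))) K r,
    IsAlgClosure.equivOfEquiv_algebraMap]
  rw [show e'.toRingEquiv (algebraMap R _ r) = algebraMap R _ r from e'.commutes r]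
  exact (IsScalarTower.algebraMap_apply R _ L r).symm

theorem exists_ringEquiv_comp {R : Type} [Field R] (hR : #R ≤ ℵ₀) (i j : R →+* ℂ) :
    ∃ τ : ℂ ≃+* ℂ, ∀ r, τ (i r) = j r := by
  obtain ⟨τ, hτ⟩ := @aux_equiv R ℂ ℂ _ _ _ i.toAlgebra j.toAlgebra _ _ hR
    (by rw [mk_complex]; exact aleph0_lt_continuum) rfl
  exact ⟨τ, hτ⟩

open IntermediateField in
theorem exists_ringEquiv_map_root {α β : ℂ} (hα : IsAlgebraic ℚ α)
    (hβ : Polynomial.aeval β (minpoly ℚ α) = 0) : ∃ τ : ℂ ≃+* ℂ, τ α = β := by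
  have hint : IsIntegral ℚ α := hα.isIntegral
  haveI := IntermediateField.adjoin.finiteDimensional hint
  haveI : Algebra.IsAlgebraic ℚ ℚ⟮α⟯ := Algebra.IsAlgebraic.of_finite ℚ _
  have hroot : β ∈ (minpoly ℚ α).aroots ℂ := by
    rw [Polynomial.mem_aroots]; exact ⟨minpoly.ne_zero hint, hβ⟩
  set φ := (IntermediateField.algHomAdjoinIntegralEquiv ℚ hint).symm ⟨β, hroot⟩ with hφdef
  have hφ : φ (IntermediateField.AdjoinSimple.gen ℚ α) = β :=
    IntermediateField.algHomAdjoinIntegralEquiv_symm_apply_gen ℚ hint ⟨β, hroot⟩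
  have hcard : #(ℚ⟮α⟯) ≤ ℵ₀ := by
    refine le_trans (Algebra.IsAlgebraic.cardinalMk_le_max ℚ _) ?_
    rw [Cardinal.mkRat]; simp
  obtain ⟨τ, hτ⟩ := exists_ringEquiv_comp hcard (algebraMap ℚ⟮α⟯ ℂ) φ.toRingHom
  refine ⟨τ, ?_⟩
  have h := hτ (IntermediateField.AdjoinSimple.gen ℚ α)
  rwa [IntermediateField.AdjoinSimple.algebraMap_gen, show φ.toRingHom = (φ : ℚ⟮α⟯ →+* ℂ) from rfl,
    AlgHom.coe_toRingHom, hφ] at h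

/-! ### Auxiliary results: growth estimates for regular endomorphisms -/

theorem eval_abs_le {N : ℕ} (p : MvPolynomial (Fin N) ℂ) {z : Fin N → ℂ} (hz : 1 ≤ ‖z‖) {k : ℕ}
    (hp : p.totalDegree ≤ k) :
    ‖eval z p‖ ≤ (∑ m ∈ p.support, ‖coeff m p‖) * ‖z‖ ^ k := by
  rw [eval_eq]
  refine (norm_sum_le _ _).trans ?_
  rw [Finset.sum_mul]
  refine Finset.sum_le_sum fun m hm => ?_
  rw [norm_mul]
  refine mul_le_mul_of_nonneg_left ?_ (norm_nonneg _)
  calc ‖∏ i ∈ m.support, z i ^ m i‖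
      = ∏ i ∈ m.support, ‖z i‖ ^ m i := by
        rw [norm_prod]; exact Finset.prod_congr rfl fun i _ => norm_pow _ _
    _ ≤ ∏ i ∈ m.support, ‖z‖ ^ m i := by
        refine Finset.prod_le_prod (fun i _ => by positivity) (fun i _ => ?_)
        exact pow_le_pow_left₀ (norm_nonneg _) (norm_le_pi_norm z i) _
    _ = ‖z‖ ^ (m.degree) := by rw [Finset.prod_pow_eq_pow_sum]; rfl
    _ ≤ ‖z‖ ^ k := by
        refine pow_le_pow_right₀ hz (le_trans ?_ hp)
        exact le_totalDegree hm

theorem eval_smul_homog {N : ℕ} {p : MvPolynomial (Fin N) ℂ} {n : ℕ} (hp : p.IsHomogeneous n)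
    (c : ℂ) (z : Fin N → ℂ) : eval (c • z) p = c ^ n * eval z p := by
  rw [eval_eq, eval_eq, Finset.mul_sum]
  refine Finset.sum_congr rfl fun m hm => ?_
  have hdeg : m.degree = n := by
    have := hp (mem_support_iff.1 hm)
    rw [Finsupp.degree_eq_weight_one]; exact this
  simp_rw [Pi.smul_apply, smul_eq_mul, mul_pow, Finset.prod_mul_distrib,
    Finset.prod_pow_eq_pow_sum]
  rw [show ∑ i ∈ m.support, m i = m.degree from rfl, hdeg]
  ring

theorem norm_preperiodic_le (N : ℕ) (hN : 1 ≤ N) (f : Fin N → MvPolynomial (Fin N) ℂ)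
    (d : ℕ) (hd : 2 ≤ d) (hreg : IsRegularEndo f d) :
    ∃ R : ℝ, 1 ≤ R ∧ ∀ x : Fin N → ℂ, IsPreperiodicPt (evalMap f) x → ‖x‖ ≤ R := by
  haveI : Nonempty (Fin N) := ⟨⟨0, hN⟩⟩
  obtain ⟨hdeg, hzero⟩ := hreg
  set g : Fin N → MvPolynomial (Fin N) ℂ := fun j => homogeneousComponent d (f j) with hg
  set G : (Fin N → ℂ) → Fin N → ℂ := fun z j => eval z (g j) with hG
  have hGcont : Continuous G :=
    continuous_pi fun j => MvPolynomial.continuous_eval (g j)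
  have hsph : IsCompact (Metric.sphere (0 : Fin N → ℂ) 1) := isCompact_sphere 0 1
  have hsne : (Metric.sphere (0 : Fin N → ℂ) 1).Nonempty := by
    refine ⟨fun _ => 1, ?_⟩
    rw [mem_sphere_zero_iff_norm, pi_norm_const]
    exact norm_one
  obtain ⟨z₀, hz₀s, hz₀min'⟩ :=
    hsph.exists_isMinOn hsne (continuous_norm.comp hGcont).continuousOn
  have hz₀min : ∀ u ∈ Metric.sphere (0 : Fin N → ℂ) 1, ‖G z₀‖ ≤ ‖G u‖ :=
    fun u hu => hz₀min' hu
  set ε := ‖G z₀‖ with hε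
  have hz₀n : ‖z₀‖ = 1 := mem_sphere_zero_iff_norm.1 hz₀s
  have hεpos : 0 < ε := by
    rcases (norm_nonneg (G z₀)).lt_or_eq with h | h
    · exact h
    · exfalso
      have hG0 : G z₀ = 0 := norm_eq_zero.1 h.symm
      have : z₀ = 0 := hzero z₀ (fun j => congrFun hG0 j)
      rw [this, norm_zero] at hz₀n; norm_num at hz₀n
  have hGlow : ∀ z : Fin N → ℂ, ε * ‖z‖ ^ d ≤ ‖G z‖ := by
    intro z
    rcases eq_or_ne z 0 with rfl | hz
    · rw [norm_zero, zero_pow (by omega), mul_zero]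
      exact norm_nonneg _
    · have hr : 0 < ‖z‖ := norm_pos_iff.2 hz
      set u : Fin N → ℂ := ((‖z‖ : ℂ))⁻¹ • z with hu
      have hun : ‖u‖ = 1 := by
        rw [hu, norm_smul, norm_inv, Complex.norm_real, Real.norm_of_nonneg (norm_nonneg z),
          inv_mul_cancel₀ hr.ne']
      have hzu : z = ((‖z‖ : ℂ)) • u := by
        rw [hu, smul_smul, mul_inv_cancel₀ (by exact_mod_cast hr.ne'), one_smul]
      have hGz : G z = ((‖z‖ : ℂ) ^ d) • G u := by
        funext j
        show eval z (g j) = ((‖z‖ : ℂ) ^ d) * eval u (g j)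
        conv_lhs => rw [hzu]
        exact eval_smul_homog (homogeneousComponent_isHomogeneous d (f j)) _ u
      rw [hGz, norm_smul, norm_pow, Complex.norm_real, Real.norm_of_nonneg (norm_nonneg z)]
      have hεu : ε ≤ ‖G u‖ := hz₀min u (mem_sphere_zero_iff_norm.2 hun)
      have := mul_le_mul_of_nonneg_left hεu (pow_nonneg (norm_nonneg z) d)
      linarith [this]
  set C : ℝ := ∑ j : Fin N, (∑ m ∈ (f j - g j).support, ‖coeff m (f j - g j)‖)
    with hC
  have hCnn : 0 ≤ C := Finset.sum_nonneg fun j _ =>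
    Finset.sum_nonneg fun m _ => norm_nonneg _
  have hdiffdeg : ∀ j, (f j - g j).totalDegree ≤ d - 1 := by
    intro j
    rw [totalDegree]
    refine Finset.sup_le fun m hm => ?_
    have hcm : coeff m (f j - g j) ≠ 0 := mem_support_iff.1 hm
    rw [coeff_sub, hg, coeff_homogeneousComponent] at hcm
    by_cases hmd : m.degree = d
    · rw [if_pos hmd, sub_self] at hcm; exact absurd rfl hcm
    · rw [if_neg hmd, sub_zero] at hcm
      have h1 : (m.sum fun _ e => e) ≤ d := by
        rw [← hdeg j]
        exact le_totalDegree (mem_support_iff.2 hcm)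
      have h2 : (m.sum fun _ e => e) = m.degree := rfl
      omega
  have hupper : ∀ z : Fin N → ℂ, 1 ≤ ‖z‖ →
      ‖evalMap f z - G z‖ ≤ C * ‖z‖ ^ (d - 1) := by
    intro z hz
    rw [pi_norm_le_iff_of_nonneg (by positivity)]
    intro j
    have h1 : (evalMap f z - G z) j = eval z (f j - g j) := by
      simp [evalMap, hG, map_sub]
    rw [h1]
    calc ‖eval z (f j - g j)‖
        ≤ (∑ m ∈ (f j - g j).support, ‖coeff m (f j - g j)‖) * ‖z‖ ^ (d - 1) :=
          eval_abs_le _ hz (hdiffdeg j)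
      _ ≤ C * ‖z‖ ^ (d - 1) := by
          refine mul_le_mul_of_nonneg_right ?_ (by positivity)
          exact Finset.single_le_sum
            (f := fun j => ∑ m ∈ (f j - g j).support, ‖coeff m (f j - g j)‖)
            (fun j _ => Finset.sum_nonneg fun m _ => norm_nonneg _)
            (Finset.mem_univ j)
  set R : ℝ := max 1 ((C + 2) / ε) with hRdef
  have hR1 : 1 ≤ R := le_max_left _ _
  have hgrow : ∀ z : Fin N → ℂ, R ≤ ‖z‖ → 2 * ‖z‖ ≤ ‖evalMap f z‖ := by
    intro z hz
    have h1 : 1 ≤ ‖z‖ := le_trans hR1 hz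
    have hA : C + 2 ≤ ε * ‖z‖ := by
      have : (C + 2) / ε ≤ ‖z‖ := le_trans (le_max_right _ _) hz
      rw [div_le_iff₀ hεpos] at this
      linarith
    have key : ‖G z‖ - ‖evalMap f z - G z‖ ≤ ‖evalMap f z‖ := by
      have h := norm_sub_norm_le (G z) (evalMap f z)
      have h2 : ‖G z - evalMap f z‖ = ‖evalMap f z - G z‖ := norm_sub_rev _ _
      linarith
    obtain ⟨e, rfl⟩ : ∃ e, d = e + 1 := ⟨d - 1, by omega⟩
    have hd1 : 1 ≤ e := by omega
    have hze : ‖z‖ ≤ ‖z‖ ^ e := le_self_pow₀ h1 (by omega)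
    have p1 : ε * (‖z‖ ^ e * ‖z‖) ≤ ‖G z‖ := by
      have := hGlow z; rwa [pow_succ] at this
    have p2 : ‖evalMap f z - G z‖ ≤ C * ‖z‖ ^ e := by
      have := hupper z h1
      simpa using this
    have p3 : 2 * ‖z‖ ≤ (ε * ‖z‖ - C) * ‖z‖ ^ e := by nlinarith [hze, h1, hA]
    have pid : (ε * ‖z‖ - C) * ‖z‖ ^ e = ε * (‖z‖ ^ e * ‖z‖) - C * ‖z‖ ^ e := by ring
    linarith
  have hiter : ∀ k : ℕ, ∀ z : Fin N → ℂ, R ≤ ‖z‖ →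
      2 ^ k * ‖z‖ ≤ ‖(evalMap f)^[k] z‖ := by
    intro k
    induction k with
    | zero => intro z hz; simp
    | succ k ih =>
      intro z hz
      rw [Function.iterate_succ_apply']
      have hk1 : (1 : ℝ) ≤ 2 ^ k := one_le_pow₀ (by norm_num)
      have h1 : R ≤ ‖(evalMap f)^[k] z‖ := by
        have := ih z hz
        nlinarith [le_trans hR1 hz]
      have h2 := hgrow _ h1
      have h3 := ih z hz
      calc (2:ℝ) ^ (k + 1) * ‖z‖ = 2 * (2 ^ k * ‖z‖) := by ring
        _ ≤ 2 * ‖(evalMap f)^[k] z‖ := by linarith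
        _ ≤ _ := h2
  refine ⟨R, hR1, fun x hx => ?_⟩
  by_contra hcon
  push_neg at hcon
  obtain ⟨n, m, hm, heq⟩ := hx
  set w := (evalMap f)^[n] x with hw
  have hwR : R ≤ ‖w‖ := by
    have := hiter n x hcon.le
    have hk1 : (1 : ℝ) ≤ 2 ^ n := one_le_pow₀ (by norm_num)
    nlinarith [le_trans hR1 hcon.le]
  have h2 : 2 ^ m * ‖w‖ ≤ ‖(evalMap f)^[m] w‖ := hiter m w hwR
  have h3 : (evalMap f)^[m] w = w := by
    rw [hw, ← Function.iterate_add_apply, add_comm]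
    exact heq
  rw [h3] at h2
  have h4 : (2 : ℝ) ≤ 2 ^ m := by
    calc (2:ℝ) = 2 ^ 1 := (pow_one 2).symm
      _ ≤ 2 ^ m := pow_le_pow_right₀ (by norm_num) hm
  nlinarith [le_trans hR1 hwR]

/-! ### Auxiliary results: conjugating a regular endomorphism by an automorphism of `ℂ` -/

theorem homogeneousComponent_map' {N : ℕ} (σ : ℂ →+* ℂ) (n : ℕ) (p : MvPolynomial (Fin N) ℂ) :
    homogeneousComponent n (MvPolynomial.map σ p) =
      MvPolynomial.map σ (homogeneousComponent n p) := by
  ext m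
  simp [coeff_homogeneousComponent, coeff_map, apply_ite σ]

theorem totalDegree_map_eq' {N : ℕ} (τ : ℂ ≃+* ℂ) (p : MvPolynomial (Fin N) ℂ) :
    (MvPolynomial.map (τ : ℂ →+* ℂ) p).totalDegree = p.totalDegree := by
  rw [totalDegree, totalDegree, support_map_of_injective p τ.injective]

theorem eval_map_comm {N : ℕ} (τ : ℂ ≃+* ℂ) (z : Fin N → ℂ) (p : MvPolynomial (Fin N) ℂ) :
    eval (fun i => τ (z i)) (MvPolynomial.map (τ : ℂ →+* ℂ) p) = τ (eval z p) := by
  rw [eval_map, ← eval₂_id p]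
  exact (eval₂_comp_left (τ : ℂ →+* ℂ) (RingHom.id ℂ) z p).symm

theorem evalMap_map_comm {N : ℕ} (τ : ℂ ≃+* ℂ) (f : Fin N → MvPolynomial (Fin N) ℂ)
    (z : Fin N → ℂ) :
    evalMap (fun i => MvPolynomial.map (τ : ℂ →+* ℂ) (f i)) (fun i => τ (z i)) =
      fun i => τ (evalMap f z i) := by
  funext i
  exact eval_map_comm τ z (f i)

theorem iterate_evalMap_map {N : ℕ} (τ : ℂ ≃+* ℂ) (f : Fin N → MvPolynomial (Fin N) ℂ)
    (k : ℕ) (z : Fin N → ℂ) :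
    (evalMap (fun i => MvPolynomial.map (τ : ℂ →+* ℂ) (f i)))^[k] (fun i => τ (z i)) =
      fun i => τ ((evalMap f)^[k] z i) := by
  induction k with
  | zero => rfl
  | succ k ih =>
    rw [Function.iterate_succ_apply', Function.iterate_succ_apply', ih, evalMap_map_comm]

theorem isPreperiodic_map {N : ℕ} (τ : ℂ ≃+* ℂ) {f : Fin N → MvPolynomial (Fin N) ℂ}
    {x : Fin N → ℂ} (h : IsPreperiodicPt (evalMap f) x) :
    IsPreperiodicPt (evalMap (fun i => MvPolynomial.map (τ : ℂ →+* ℂ) (f i)))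
      (fun i => τ (x i)) := by
  obtain ⟨n, m, hm, heq⟩ := h
  exact ⟨n, m, hm, by rw [iterate_evalMap_map, iterate_evalMap_map, heq]⟩

theorem isRegularEndo_map {N d : ℕ} (τ : ℂ ≃+* ℂ) {f : Fin N → MvPolynomial (Fin N) ℂ}
    (h : IsRegularEndo f d) :
    IsRegularEndo (fun i => MvPolynomial.map (τ : ℂ →+* ℂ) (f i)) d := by
  constructor
  · intro j; rw [totalDegree_map_eq']; exact h.1 j
  · intro z hz
    have hz' : ∀ j, eval (fun i => τ.symm (z i)) (homogeneousComponent d (f j)) = 0 := by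
      intro j
      have h1 := hz j
      rw [homogeneousComponent_map'] at h1
      have h2 : z = fun i => τ (τ.symm (z i)) := funext fun i => (τ.apply_symm_apply _).symm
      rw [h2, eval_map_comm τ (fun i => τ.symm (z i)) (homogeneousComponent d (f j))] at h1
      exact (map_eq_zero_iff _ τ.injective).1 h1
    have h0 := h.2 _ hz'
    funext i
    have h3 : τ.symm (z i) = 0 := congrFun h0 i
    have := congrArg τ h3
    rwa [τ.apply_symm_apply, map_zero] at this

/-- The tuple `f` with coefficients restricted to the subfield `K`. -/
def restrictK {N : ℕ} (K : Subfield ℂ) (f : Fin N → MvPolynomial (Fin N) ℂ)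
    (hfK : ∀ i, CoeffsIn K (f i)) : Fin N → MvPolynomial (Fin N) K :=
  fun i => ∑ m ∈ (f i).support, MvPolynomial.monomial m (⟨MvPolynomial.coeff m (f i), hfK i m⟩ : K)

theorem map_restrictK {N : ℕ} (K : Subfield ℂ) (f : Fin N → MvPolynomial (Fin N) ℂ)
    (hfK : ∀ i, CoeffsIn K (f i)) (i : Fin N) :
    MvPolynomial.map K.subtype (restrictK K f hfK i) = f i := by
  rw [restrictK, map_sum]
  simp only [map_monomial]
  exact support_sum_monomial_coeff (f i)

/-! ### The main theorem -/

/-- For a regular endomorphism `f` of `𝔸^N` of algebraic degree `d ≥ 2` over a number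
field `K`, the houses of the coordinates of `f`-preperiodic algebraic points are uniformly
bounded. -/
theorem preperiodic_points_bounded_house
    (N : ℕ) (hN : 1 ≤ N)
    (K : Subfield ℂ) [CharZero K] [FiniteDimensional ℚ K]
    (f : Fin N → MvPolynomial (Fin N) ℂ) (hfK : ∀ i, CoeffsIn K (f i))
    (d : ℕ) (hd : 2 ≤ d) (hreg : IsRegularEndo f d) :
    ∃ c : ℝ, 0 < c ∧ ∀ x : Fin N → ℂ, (∀ i, IsAlgebraic ℚ (x i)) →
      IsPreperiodicPt (evalMap f) x → ∀ i, house (x i) ≤ c := by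
  haveI : NumberField K := ⟨⟩
  have hKcard : #K ≤ ℵ₀ := by
    haveI : Algebra.IsAlgebraic ℚ K := Algebra.IsAlgebraic.of_finite ℚ K
    refine le_trans (Algebra.IsAlgebraic.cardinalMk_le_max ℚ K) ?_
    rw [Cardinal.mkRat]; simp
  set F := restrictK K f hfK with hF
  have hreg' : ∀ e : K →+* ℂ, IsRegularEndo (fun i => MvPolynomial.map e (F i)) d := by
    intro e
    obtain ⟨τ, hτ⟩ := exists_ringEquiv_comp hKcard K.subtype e
    have hmap : ∀ i, MvPolynomial.map e (F i) = MvPolynomial.map (τ : ℂ →+* ℂ) (f i) := by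
      intro i
      rw [← map_restrictK K f hfK i, MvPolynomial.map_map,
        show ((τ : ℂ →+* ℂ).comp K.subtype) = e from RingHom.ext fun r => hτ r]
    rw [show (fun i => MvPolynomial.map e (F i))
        = fun i => MvPolynomial.map (τ : ℂ →+* ℂ) (f i) from funext hmap]
    exact isRegularEndo_map τ hreg
  choose R hR1 hRb using fun e : K →+* ℂ => norm_preperiodic_le N hN _ d hd (hreg' e)
  obtain ⟨c, hc⟩ := (Set.finite_range R).bddAbove
  have hcu : ∀ e : K →+* ℂ, R e ≤ c := fun e => hc ⟨e, rfl⟩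
  refine ⟨max c 1, lt_of_lt_of_le one_pos (le_max_right _ _), ?_⟩
  intro x halg hpre i
  rw [house]
  refine Real.sSup_le ?_ (le_trans zero_le_one (le_max_right _ _))
  rintro y ⟨β, hβ, rfl⟩
  obtain ⟨τ, hτβ⟩ := exists_ringEquiv_map_root (halg i) hβ
  set e := (τ : ℂ →+* ℂ).comp K.subtype with he
  have hmap : ∀ i', MvPolynomial.map e (F i') = MvPolynomial.map (τ : ℂ →+* ℂ) (f i') := by
    intro i'
    rw [← map_restrictK K f hfK i', MvPolynomial.map_map]
  have hpre' : IsPreperiodicPt (evalMap (fun i' => MvPolynomial.map e (F i')))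
      (fun i' => τ (x i')) := by
    rw [show (fun i' => MvPolynomial.map e (F i'))
        = fun i' => MvPolynomial.map (τ : ℂ →+* ℂ) (f i') from funext hmap]
    exact isPreperiodic_map τ hpre
  have hb := hRb e _ hpre'
  have hββ : ‖β‖ ≤ R e := by
    rw [← hτβ]
    calc ‖τ (x i)‖ = ‖(fun i' => τ (x i')) i‖ := rfl
      _ ≤ ‖fun i' => τ (x i')‖ := norm_le_pi_norm (fun i' => τ (x i') : Fin N → ℂ) i
      _ ≤ R e := hb
  exact le_trans hββ (le_trans (hcu e) (le_max_left _ _))
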